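/- arXiv:1410.8085 — 2 statements merged into one kernel-verified Lean document; each statement's English description precedes it below -/
import Mathlib

section
/- Let ν, β, γ be real numbers and define the operator F[u] = ν(u²)⁗' + β(u²)''' + γ(u²)' (fifth, third, and first x-derivatives of u²). Then the subspace W₃ = span{1, cos x, sin x} is invariant under F if and only if 16ν - 4β + γ = 0. -/
open Real

/-- The fifth-order dispersive operator `F[u] = ν (u²)⁽⁵⁾ + β (u²)''' + γ (u²)'`. -/
noncomputable def dispOp (ν β γ : ℝ) (g : ℝ → ℝ) (x : ℝ) : ℝ :=
  ν * iteratedDeriv 5 (fun y => (g y) ^ 2) x +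
    β * iteratedDeriv 3 (fun y => (g y) ^ 2) x +
    γ * deriv (fun y => (g y) ^ 2) x

/-- Trig polynomial of degree ≤ 2. -/
noncomputable def trigP (A B C D E : ℝ) : ℝ → ℝ :=
  fun x => A + B * Real.cos x + C * Real.sin x + D * Real.cos (2*x) + E * Real.sin (2*x)

lemma hasDerivAt_trigP (A B C D E x : ℝ) :
    HasDerivAt (trigP A B C D E) (trigP 0 C (-B) (2*E) (-2*D) x) x := by
  have h2 : HasDerivAt (fun y : ℝ => 2*y) 2 x := by
    simpa using (hasDerivAt_id x).const_mul 2
  have hc : HasDerivAt (fun y : ℝ => Real.cos (2*y)) (-Real.sin (2*x) * 2) x :=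
    (Real.hasDerivAt_cos (2*x)).comp x h2
  have hs : HasDerivAt (fun y : ℝ => Real.sin (2*y)) (Real.cos (2*x) * 2) x :=
    (Real.hasDerivAt_sin (2*x)).comp x h2
  have := ((((hasDerivAt_const x A).add
      ((Real.hasDerivAt_cos x).const_mul B)).add
      ((Real.hasDerivAt_sin x).const_mul C)).add
      (hc.const_mul D)).add (hs.const_mul E)
  exact this.congr_deriv (by simp only [trigP]; ring)

lemma deriv_trigP (A B C D E : ℝ) :
    deriv (trigP A B C D E) = trigP 0 C (-B) (2*E) (-2*D) :=
  funext fun x => (hasDerivAt_trigP A B C D E x).deriv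

lemma sq_eq_trigP (a b c : ℝ) :
    (fun y => (a + b * Real.cos y + c * Real.sin y) ^ 2) =
      trigP (a^2 + (b^2+c^2)/2) (2*a*b) (2*a*c) ((b^2-c^2)/2) (b*c) := by
  funext x
  simp only [trigP, Real.cos_two_mul, Real.sin_two_mul]
  linear_combination c^2 * (Real.sin_sq_add_cos_sq x)

lemma itd_succ_trigP (n : ℕ) (A B C D E : ℝ) :
    iteratedDeriv (n+1) (trigP A B C D E) =
      iteratedDeriv n (trigP 0 C (-B) (2*E) (-2*D)) := by
  rw [iteratedDeriv_succ', deriv_trigP]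

lemma itd3_trigP (A B C D E : ℝ) :
    iteratedDeriv 3 (trigP A B C D E) = trigP 0 (-C) B (-8*E) (8*D) := by
  rw [show (3 : ℕ) = 0+1+1+1 from rfl, itd_succ_trigP, itd_succ_trigP, itd_succ_trigP,
    iteratedDeriv_zero]
  funext x; simp only [trigP]; ring

lemma itd5_trigP (A B C D E : ℝ) :
    iteratedDeriv 5 (trigP A B C D E) = trigP 0 C (-B) (32*E) (-32*D) := by
  rw [show (5 : ℕ) = 0+1+1+1+1+1 from rfl, itd_succ_trigP, itd_succ_trigP, itd_succ_trigP,
    itd_succ_trigP, itd_succ_trigP, iteratedDeriv_zero]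
  funext x; simp only [trigP]; ring

lemma dispOp_eq (ν β γ a b c x : ℝ) :
    dispOp ν β γ (fun y => a + b * Real.cos y + c * Real.sin y) x =
      (ν - β + γ) * (2*a*c) * Real.cos x - (ν - β + γ) * (2*a*b) * Real.sin x
        + (16*ν - 4*β + γ) * (2*b*c) * Real.cos (2*x)
        - (16*ν - 4*β + γ) * (b^2 - c^2) * Real.sin (2*x) := by
  rw [dispOp, sq_eq_trigP, itd5_trigP, itd3_trigP, deriv_trigP]
  simp only [trigP]; ring

theorem invariant_subspace_iff (ν β γ : ℝ) :
    (∀ a b c : ℝ, ∃ a' b' c' : ℝ, ∀ x : ℝ,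
        dispOp ν β γ (fun y => a + b * Real.cos y + c * Real.sin y) x =
          a' + b' * Real.cos x + c' * Real.sin x) ↔
      16 * ν - 4 * β + γ = 0 := by
  constructor
  · intro h
    obtain ⟨a', b', c', hx⟩ := h 0 1 1
    have key : ∀ x : ℝ, (16*ν - 4*β + γ) * 2 * Real.cos (2*x) =
        a' + b' * Real.cos x + c' * Real.sin x := by
      intro x
      have := hx x
      rw [dispOp_eq] at this
      linarith [this]
    have h0 := key 0
    have hpi := key Real.pi
    have hpi2 := key (Real.pi / 2)
    have hnpi2 := key (-(Real.pi / 2))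
    simp [Real.cos_pi, Real.sin_pi, Real.cos_pi_div_two, Real.sin_pi_div_two,
      mul_div_cancel₀, Real.cos_two_pi, Real.sin_two_pi] at h0 hpi hpi2 hnpi2
    linarith
  · intro h a b c
    refine ⟨0, (ν - β + γ) * (2*a*c), -((ν - β + γ) * (2*a*b)), fun x => ?_⟩
    rw [dispOp_eq, h]
    ring
end

section
/- Suppose 16ν - 4β + γ = 0 and let μ = 2(ν - β + γ). Then for g(x) = a + b cos x + c sin x, one has ν(g²)⁗' + β(g²)''' + γ(g²)' = μ a c · cos x - μ a b · sin x (the constant component vanishes and the coefficients of cos x and sin x are μac and -μab respectively). -/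
open Real

/-- A general trig polynomial with frequencies 1 and 2. -/
noncomputable def trigF (A B C D E : ℝ) : ℝ → ℝ :=
  fun y => A + B * Real.cos y + C * Real.sin y + D * Real.cos (2 * y) + E * Real.sin (2 * y)

lemma deriv_trigF (A B C D E : ℝ) :
    deriv (trigF A B C D E) = trigF 0 C (-B) (2 * E) (-2 * D) := by
  funext x
  have h2 : HasDerivAt (fun y : ℝ => 2 * y) 2 x := by
    simpa using (hasDerivAt_id x).const_mul 2
  have hd : HasDerivAt (fun y : ℝ => Real.cos (2 * y)) (-Real.sin (2 * x) * 2) x :=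
    (Real.hasDerivAt_cos (2 * x)).comp x h2
  have he : HasDerivAt (fun y : ℝ => Real.sin (2 * y)) (Real.cos (2 * x) * 2) x :=
    (Real.hasDerivAt_sin (2 * x)).comp x h2
  have H : HasDerivAt (trigF A B C D E)
      (0 + B * (-Real.sin x) + C * Real.cos x + D * (-Real.sin (2 * x) * 2)
        + E * (Real.cos (2 * x) * 2)) x := by
    exact ((((hasDerivAt_const x A).add ((Real.hasDerivAt_cos x).const_mul B)).add
      ((Real.hasDerivAt_sin x).const_mul C)).add (hd.const_mul D)).add (he.const_mul E)
  rw [H.deriv]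
  simp [trigF]; ring

lemma iter3_trigF (A B C D E : ℝ) :
    iteratedDeriv 3 (trigF A B C D E) = trigF 0 (-C) B (-8 * E) (8 * D) := by
  rw [iteratedDeriv_succ', deriv_trigF, iteratedDeriv_succ', deriv_trigF,
    iteratedDeriv_succ', deriv_trigF, iteratedDeriv_zero]
  funext x; simp [trigF]; ring

lemma iter5_trigF (A B C D E : ℝ) :
    iteratedDeriv 5 (trigF A B C D E) = trigF 0 C (-B) (32 * E) (-32 * D) := by
  rw [iteratedDeriv_succ', deriv_trigF, iteratedDeriv_succ', deriv_trigF,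
    iteratedDeriv_succ', deriv_trigF, iteratedDeriv_succ', deriv_trigF,
    iteratedDeriv_succ', deriv_trigF, iteratedDeriv_zero]
  funext x; simp [trigF]; ring

theorem dispOp_on_trig_subspace (ν β γ : ℝ) (h : 16 * ν - 4 * β + γ = 0)
    (μ : ℝ) (hμ : μ = 2 * (ν - β + γ)) (a b c : ℝ) (x : ℝ) :
    dispOp ν β γ (fun y => a + b * Real.cos y + c * Real.sin y) x =
      μ * a * c * Real.cos x - μ * a * b * Real.sin x := by
  have hg : (fun y => ((fun y => a + b * Real.cos y + c * Real.sin y) y) ^ 2) =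
      trigF (a ^ 2 + (b ^ 2 + c ^ 2) / 2) (2 * a * b) (2 * a * c)
        ((b ^ 2 - c ^ 2) / 2) (b * c) := by
    funext y
    have hs : Real.sin y ^ 2 = 1 - Real.cos y ^ 2 := Real.sin_sq y
    simp only [trigF, Real.cos_two_mul, Real.sin_two_mul]
    nlinarith [hs]
  unfold dispOp
  rw [hg, iter5_trigF, iter3_trigF, deriv_trigF]
  simp only [trigF]
  have hγ : γ = 4 * β - 16 * ν := by linarith
  subst hγ hμ
  ring
end
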